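/- Let M₁ = U(N)·v₁ and M₂ = U(N)·v₂ be cyclic modules over a nilpotent Lie algebra N with ordered basis f₁,…,f_N, and fix a homogeneous monomial order on the PBW monomials. If p is an essential multi-exponent for M₁ and q is an essential multi-exponent for M₂, then p + q is an essential multi-exponent for the Cartan component M₁ ⊙ M₂ = U(N)·(v₁ ⊗ v₂) ⊆ M₁ ⊗ M₂. -/

import Mathlib

open scoped TensorProduct

/-- Application of the PBW monomial `f₁^{p₁} ⋯ f_N^{p_N}` (with respect to the
ordered basis `f₁, …, f_N` of a Lie algebra) to a vector of a Lie module. -/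
def monomialVec {N : ℕ} {L M : Type*} [LieRing L] [AddCommGroup M]
    [LieRingModule L M] (f : Fin N → L) (p : Fin N → ℕ) (m : M) : M :=
  (List.finRange N).foldr (fun i x => (fun y => ⁅f i, y⁆)^[p i] x) m

/-- `p` is an essential multi-exponent for the cyclic vector `v` (with respect to the
ordered basis `f` and the monomial order `lo`) if `f^p v` is not in the span of the
vectors `f^q v` with `q < p`. -/
def IsEssential {N : ℕ} {L M : Type*} [LieRing L] [AddCommGroup M] [Module ℂ M]
    [LieRingModule L M] (lo : LinearOrder (Fin N → ℕ)) (f : Fin N → L)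
    (v : M) (p : Fin N → ℕ) : Prop :=
  monomialVec f p v ∉ Submodule.span ℂ {x | ∃ q, lo.lt q p ∧ x = monomialVec f q v}

section Aux

variable {N : ℕ} {L : Type*} [LieRing L] [LieAlgebra ℂ L]

/-- Product of endomorphism powers along a list. -/
noncomputable def listProd {M : Type*} [AddCommGroup M] [Module ℂ M] [LieRingModule L M]
    [LieModule ℂ L M] (f : Fin N → L) (l : List (Fin N)) (p : Fin N → ℕ) :
    Module.End ℂ M :=
  (l.map (fun i => (LieModule.toEnd ℂ L M (f i)) ^ (p i))).prod

variable {M : Type*} [AddCommGroup M] [Module ℂ M] [LieRingModule L M] [LieModule ℂ L M]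

lemma listProd_nil (f : Fin N → L) (p : Fin N → ℕ) :
    (listProd f [] p : Module.End ℂ M) = 1 := rfl

lemma listProd_cons (f : Fin N → L) (i : Fin N) (t : List (Fin N)) (p : Fin N → ℕ) :
    (listProd f (i :: t) p : Module.End ℂ M)
      = ((LieModule.toEnd ℂ L M (f i)) ^ (p i)) * listProd f t p := by
  simp [listProd]

lemma listProd_congr (f : Fin N → L) (l : List (Fin N)) {p p' : Fin N → ℕ}
    (h : ∀ i ∈ l, p i = p' i) :
    (listProd f l p : Module.End ℂ M) = listProd f l p' := by
  unfold listProd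
  congr 1
  exact List.map_congr_left fun i hi => by rw [h i hi]

lemma monomialVec_eq_listProd (f : Fin N → L) (p : Fin N → ℕ) (m : M) :
    monomialVec f p m = listProd f (List.finRange N) p m := by
  unfold monomialVec listProd
  induction (List.finRange N) with
  | nil => rfl
  | cons i t ih =>
      simp only [List.foldr_cons, List.map_cons, List.prod_cons, Module.End.mul_apply, ih]
      rw [Module.End.pow_apply]
      rfl

variable {M₁ M₂ : Type*}
  [AddCommGroup M₁] [Module ℂ M₁] [LieRingModule L M₁] [LieModule ℂ L M₁]
  [AddCommGroup M₂] [Module ℂ M₂] [LieRingModule L M₂] [LieModule ℂ L M₂]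

lemma toEnd_tensor (x : L) :
    LieModule.toEnd ℂ L (M₁ ⊗[ℂ] M₂) x
      = (LieModule.toEnd ℂ L M₁ x).rTensor M₂ + (LieModule.toEnd ℂ L M₂ x).lTensor M₁ := by
  apply TensorProduct.ext'
  intro m n
  simp [TensorProduct.LieModule.lie_tmul_right]

lemma toEnd_pow_tmul (x : L) (k : ℕ) (m : M₁) (n : M₂) :
    ((LieModule.toEnd ℂ L (M₁ ⊗[ℂ] M₂) x) ^ k) (m ⊗ₜ[ℂ] n)
      = ∑ j ∈ Finset.range (k + 1),
          ((k.choose j : ℂ)) • (((LieModule.toEnd ℂ L M₁ x) ^ j) m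
            ⊗ₜ[ℂ] ((LieModule.toEnd ℂ L M₂ x) ^ (k - j)) n) := by
  have hcomm : Commute ((LieModule.toEnd ℂ L M₁ x).rTensor M₂)
      ((LieModule.toEnd ℂ L M₂ x).lTensor M₁) := by
    unfold Commute SemiconjBy
    apply TensorProduct.ext'
    intro m n
    simp
  rw [toEnd_tensor, hcomm.add_pow]
  rw [LinearMap.sum_apply]
  refine Finset.sum_congr rfl fun j _ => ?_
  rw [Module.End.mul_apply, Module.End.mul_apply, LinearMap.rTensor_pow, LinearMap.lTensor_pow]
  simp [Module.End.natCast_apply, LinearMap.rTensor_tmul, LinearMap.lTensor_tmul,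
    Nat.cast_smul_eq_nsmul]

/-- The multi-exponent mask of a list. -/
def mask (l : List (Fin N)) (r : Fin N → ℕ) : Fin N → ℕ :=
  fun i => if i ∈ l then r i else 0

lemma listProd_tmul (f : Fin N → L) (l : List (Fin N)) (hl : l.Nodup) (r : Fin N → ℕ)
    (m : M₁) (n : M₂) :
    (listProd f l r : Module.End ℂ (M₁ ⊗[ℂ] M₂)) (m ⊗ₜ[ℂ] n)
      = ∑ a ∈ Finset.Iic (mask l r),
          ((l.map (fun i => ((r i).choose (a i) : ℂ))).prod) •
            ((listProd f l a : Module.End ℂ M₁) m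
              ⊗ₜ[ℂ] (listProd f l (r - a) : Module.End ℂ M₂) n) := by
  induction l with
  | nil =>
      have h0 : Finset.Iic (mask ([] : List (Fin N)) r) = {0} := by
        ext a
        simp [mask, Finset.mem_Iic, Pi.le_def, funext_iff, Nat.le_zero]
      rw [h0]
      simp [listProd_nil]
  | cons i t ih =>
      rw [List.nodup_cons] at hl
      obtain ⟨hi, ht⟩ := hl
      rw [listProd_cons, Module.End.mul_apply, ih ht, map_sum]
      have step : ∀ a ∈ Finset.Iic (mask t r),
          ((LieModule.toEnd ℂ L (M₁ ⊗[ℂ] M₂) (f i)) ^ (r i))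
            (((t.map (fun e => ((r e).choose (a e) : ℂ))).prod) •
              ((listProd f t a : Module.End ℂ M₁) m
                ⊗ₜ[ℂ] (listProd f t (r - a) : Module.End ℂ M₂) n))
          = ∑ j ∈ Finset.range (r i + 1),
              (((i :: t).map (fun e =>
                  ((r e).choose ((Function.update a i j) e) : ℂ))).prod) •
                ((listProd f (i :: t) (Function.update a i j) : Module.End ℂ M₁) m
                  ⊗ₜ[ℂ] (listProd f (i :: t) (r - Function.update a i j) :
                    Module.End ℂ M₂) n) := by
        intro a ha
        rw [map_smul, toEnd_pow_tmul, Finset.smul_sum]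
        refine Finset.sum_congr rfl fun j hj => ?_
        rw [smul_smul]
        have h1 : (listProd f (i :: t) (Function.update a i j) : Module.End ℂ M₁) m
            = ((LieModule.toEnd ℂ L M₁ (f i)) ^ j) ((listProd f t a : Module.End ℂ M₁) m) := by
          rw [listProd_cons, Module.End.mul_apply, Function.update_self,
            listProd_congr f t (fun e he =>
              Function.update_of_ne (ne_of_mem_of_not_mem he hi) j a)]
        have h2 : (listProd f (i :: t) (r - Function.update a i j) : Module.End ℂ M₂) n
            = ((LieModule.toEnd ℂ L M₂ (f i)) ^ (r i - j))
                ((listProd f t (r - a) : Module.End ℂ M₂) n) := by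
          rw [listProd_cons, Module.End.mul_apply]
          have : (r - Function.update a i j) i = r i - j := by
            simp [Pi.sub_apply]
          have hP2 : (listProd f t (r - Function.update a i j) : Module.End ℂ M₂)
              = listProd f t (r - a) := by
            refine listProd_congr f t fun e he => ?_
            rw [Pi.sub_apply, Pi.sub_apply,
              Function.update_of_ne (ne_of_mem_of_not_mem he hi) j a]
          rw [this, hP2]
        rw [h1, h2]
        congr 1
        rw [List.map_cons, List.prod_cons, Function.update_self]
        have : (t.map (fun e => ((r e).choose ((Function.update a i j) e) : ℂ)))
            = (t.map (fun e => ((r e).choose (a e) : ℂ))) := by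
          refine List.map_congr_left fun e he => ?_
          rw [Function.update_of_ne (ne_of_mem_of_not_mem he hi) j a]
        rw [this]
        ring
      rw [Finset.sum_congr rfl step]
      rw [← Finset.sum_product']
      refine Finset.sum_nbij' (fun x => Function.update x.1 i x.2)
        (fun b => (Function.update b i 0, b i)) ?_ ?_ ?_ ?_ ?_
      · rintro ⟨a, j⟩ hx
        dsimp only
        rw [Finset.mem_product] at hx
        obtain ⟨ha, hj⟩ := hx
        rw [Finset.mem_Iic, Pi.le_def] at ha ⊢
        intro e
        by_cases he : e = i
        · subst he
          simp only [Function.update_self, mask, List.mem_cons, true_or, if_pos (Or.inl rfl)]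
          exact Nat.lt_succ_iff.mp (Finset.mem_range.mp hj)
        · rw [Function.update_of_ne he]
          refine le_trans (ha e) ?_
          unfold mask
          by_cases het : e ∈ t
          · simp [het, List.mem_cons]
          · simp [het]
      · intro b hb
        rw [Finset.mem_Iic, Pi.le_def] at hb
        rw [Finset.mem_product]
        dsimp only
        constructor
        · rw [Finset.mem_Iic, Pi.le_def]
          intro e
          by_cases he : e = i
          · subst he; simp
          · rw [Function.update_of_ne he]
            refine le_trans (hb e) ?_
            unfold mask
            by_cases het : e ∈ t
            · simp [het, he, List.mem_cons]
            · simp [het, he, List.mem_cons]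
        · rw [Finset.mem_range, Nat.lt_succ_iff]
          have := hb i
          unfold mask at this
          simpa using this
      · rintro ⟨a, j⟩ hx
        dsimp only
        rw [Finset.mem_product, Finset.mem_Iic, Pi.le_def] at hx
        have hai : a i = 0 := by
          have := hx.1 i
          unfold mask at this
          simpa [hi] using Nat.le_zero.mp (by simpa [hi] using this)
        simp [Function.update_idem, Function.update_self, ← hai, Function.update_eq_self]
      · intro b hb
        dsimp only
        simp [Function.update_idem, Function.update_eq_self]
      · rintro ⟨a, j⟩ hx
        rfl

end Aux

section Main

variable {N : ℕ} {L : Type*} [LieRing L] [LieAlgebra ℂ L]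
variable {M₁ M₂ : Type*}
  [AddCommGroup M₁] [Module ℂ M₁] [LieRingModule L M₁] [LieModule ℂ L M₁]
  [AddCommGroup M₂] [Module ℂ M₂] [LieRingModule L M₂] [LieModule ℂ L M₂]

lemma monomialVec_tmul (f : Fin N → L) (r : Fin N → ℕ) (m : M₁) (n : M₂) :
    monomialVec f r (m ⊗ₜ[ℂ] n)
      = ∑ a ∈ Finset.Iic r, (∏ i, ((r i).choose (a i) : ℂ)) •
          (monomialVec f a m ⊗ₜ[ℂ] monomialVec f (r - a) n) := by
  rw [monomialVec_eq_listProd, listProd_tmul f _ (List.nodup_finRange N)]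
  have hmask : mask (List.finRange N) r = r := by
    funext i; simp [mask]
  rw [hmask]
  refine Finset.sum_congr rfl fun a _ => ?_
  rw [monomialVec_eq_listProd, monomialVec_eq_listProd, Fin.prod_univ_def]

end Main

/-- If `p` is essential for the cyclic module `(M₁, v₁)` and `q` is
essential for `(M₂, v₂)`, then `p + q` is essential for the Cartan component
`U(N)·(v₁ ⊗ v₂) ⊆ M₁ ⊗ M₂`, i.e. for the vector `v₁ ⊗ v₂` of `M₁ ⊗ M₂`.
Here `lo` is a homogeneous monomial order on `ℕ^N`: a total order compatible with
addition and refining the total-degree order. -/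
theorem stmt4 {N : ℕ} {L : Type*} [LieRing L] [LieAlgebra ℂ L]
    {M₁ M₂ : Type*}
    [AddCommGroup M₁] [Module ℂ M₁] [LieRingModule L M₁] [LieModule ℂ L M₁]
    [AddCommGroup M₂] [Module ℂ M₂] [LieRingModule L M₂] [LieModule ℂ L M₂]
    (f : Fin N → L)
    (lo : LinearOrder (Fin N → ℕ))
    (hadd : ∀ p q r : Fin N → ℕ, lo.lt p q → lo.lt (p + r) (q + r))
    (hhom : ∀ p q : Fin N → ℕ, (∑ i, p i) < (∑ i, q i) → lo.lt p q)
    (v₁ : M₁) (v₂ : M₂) (p q : Fin N → ℕ)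
    (hp : IsEssential lo f v₁ p) (hq : IsEssential lo f v₂ q) :
    IsEssential lo f (v₁ ⊗ₜ[ℂ] v₂ : M₁ ⊗[ℂ] M₂) (p + q) := by
  classical
  unfold IsEssential at hp hq ⊢
  -- order helpers
  have hle : ∀ a b : Fin N → ℕ, ¬ lo.lt a b → (a = b ∨ lo.lt b a) := by
    intro a b h
    rcases @lt_trichotomy _ lo a b with h1 | h1 | h1
    · exact absurd h1 h
    · exact Or.inl h1
    · exact Or.inr h1
  have hirr : ∀ a : Fin N → ℕ, ¬ lo.lt a a := fun a =>
    @lt_irrefl _ lo.toPartialOrder.toPreorder a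
  have hasym : ∀ a b : Fin N → ℕ, lo.lt a b → lo.lt b a → False := fun a b h1 h2 =>
    @lt_asymm _ lo.toPartialOrder.toPreorder a b h1 h2
  have htrans : ∀ a b c : Fin N → ℕ, lo.lt a b → lo.lt b c → lo.lt a c :=
    fun a b c h1 h2 => @lt_trans _ lo.toPartialOrder.toPreorder a b c h1 h2
  have hcomm : ∀ a b : Fin N → ℕ, lo.lt a b → ∀ c, lo.lt (c + a) (c + b) := by
    intro a b h c
    have := hadd a b c h
    rwa [add_comm a c, add_comm b c] at this
  have hlele : ∀ a b c d : Fin N → ℕ, (a = c ∨ lo.lt c a) → (b = d ∨ lo.lt d b) →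
      (a = c ∧ b = d) ∨ lo.lt (c + d) (a + b) := by
    rintro a b c d (rfl | h1) (rfl | h2)
    · exact Or.inl ⟨rfl, rfl⟩
    · exact Or.inr (hcomm d b h2 a)
    · exact Or.inr (hadd c a b h1)
    · exact Or.inr (htrans _ _ _ (hadd c a d h1) (hcomm d b h2 a))
  -- dual functionals
  obtain ⟨φ₁, hφ₁x, hφ₁⟩ := Submodule.exists_dual_map_eq_bot_of_notMem hp inferInstance
  obtain ⟨φ₂, hφ₂x, hφ₂⟩ := Submodule.exists_dual_map_eq_bot_of_notMem hq inferInstance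
  have hz1 : ∀ w ∈ Submodule.span ℂ {x | ∃ a, lo.lt a p ∧ x = monomialVec f a v₁},
      φ₁ w = 0 := by
    intro w hw
    have : φ₁ w ∈ Submodule.map φ₁
        (Submodule.span ℂ {x | ∃ a, lo.lt a p ∧ x = monomialVec f a v₁}) :=
      Submodule.mem_map_of_mem hw
    rw [hφ₁] at this
    simpa using this
  have hz2 : ∀ w ∈ Submodule.span ℂ {x | ∃ a, lo.lt a q ∧ x = monomialVec f a v₂},
      φ₂ w = 0 := by
    intro w hw
    have : φ₂ w ∈ Submodule.map φ₂
        (Submodule.span ℂ {x | ∃ a, lo.lt a q ∧ x = monomialVec f a v₂}) :=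
      Submodule.mem_map_of_mem hw
    rw [hφ₂] at this
    simpa using this
  set Φ : (M₁ ⊗[ℂ] M₂) →ₗ[ℂ] ℂ :=
    (TensorProduct.lid ℂ ℂ).toLinearMap ∘ₗ TensorProduct.map φ₁ φ₂ with hΦdef
  have hΦ : ∀ (u : M₁) (w : M₂), Φ (u ⊗ₜ[ℂ] w) = φ₁ u * φ₂ w := by
    intro u w
    simp [hΦdef, smul_eq_mul]
  have hval : ∀ r : Fin N → ℕ, Φ (monomialVec f r (v₁ ⊗ₜ[ℂ] v₂))
      = ∑ a ∈ Finset.Iic r, (∏ i, ((r i).choose (a i) : ℂ)) *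
          (φ₁ (monomialVec f a v₁) * φ₂ (monomialVec f (r - a) v₂)) := by
    intro r
    rw [monomialVec_tmul, map_sum]
    refine Finset.sum_congr rfl fun a _ => ?_
    rw [map_smul, hΦ, smul_eq_mul]
  have key : ∀ r : Fin N → ℕ, lo.lt r (p + q) → Φ (monomialVec f r (v₁ ⊗ₜ[ℂ] v₂)) = 0 := by
    intro r hr
    rw [hval r]
    refine Finset.sum_eq_zero fun a ha => ?_
    rw [Finset.mem_Iic] at ha
    by_cases h1 : lo.lt a p
    · rw [hz1 _ (Submodule.subset_span ⟨a, h1, rfl⟩)]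
      ring
    by_cases h2 : lo.lt (r - a) q
    · rw [hz2 _ (Submodule.subset_span ⟨r - a, h2, rfl⟩)]
      ring
    exfalso
    have hsum : a + (r - a) = r := by
      funext i
      simp only [Pi.add_apply, Pi.sub_apply]
      exact Nat.add_sub_cancel' (ha i)
    rcases hlele a (r - a) p q (hle a p h1) (hle (r - a) q h2) with ⟨h3, h4⟩ | h3
    · rw [← hsum, h4, h3] at hr
      exact hirr _ hr
    · rw [hsum] at h3
      exact hasym _ _ hr h3
  have keyval : Φ (monomialVec f (p + q) (v₁ ⊗ₜ[ℂ] v₂)) ≠ 0 := by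
    rw [hval]
    have hpq : (p + q) - p = q := by
      funext i
      simp only [Pi.add_apply, Pi.sub_apply]
      exact Nat.add_sub_cancel_left (p i) (q i)
    rw [Finset.sum_eq_single p]
    · rw [hpq]
      refine mul_ne_zero ?_ (mul_ne_zero hφ₁x hφ₂x)
      refine Finset.prod_ne_zero_iff.mpr fun i _ => ?_
      refine Nat.cast_ne_zero.mpr ?_
      exact (Nat.choose_pos (by simp : p i ≤ (p + q) i)).ne'
    · intro a ha hne
      rw [Finset.mem_Iic] at ha
      by_cases h1 : lo.lt a p
      · rw [hz1 _ (Submodule.subset_span ⟨a, h1, rfl⟩)]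
        ring
      rcases hle a p h1 with rfl | h1'
      · exact absurd rfl hne
      have hsum : a + ((p + q) - a) = p + q := by
        funext i
        simp only [Pi.add_apply, Pi.sub_apply]
        exact Nat.add_sub_cancel' (ha i)
      have h2 : lo.lt ((p + q) - a) q := by
        by_contra h2
        rcases hle _ q h2 with h3 | h3
        · rw [h3] at hsum
          have hap : a = p := by
            funext i
            have := congrFun hsum i
            simp only [Pi.add_apply] at this
            exact Nat.add_right_cancel this
          rw [hap] at h1'
          exact hirr _ h1'
        · rcases hlele a ((p + q) - a) p q (Or.inr h1') (Or.inr h3) with ⟨h5, _⟩ | h4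
          · rw [h5] at h1'
            exact hirr _ h1'
          · rw [hsum] at h4
            exact hirr _ h4
      rw [hz2 _ (Submodule.subset_span ⟨(p + q) - a, h2, rfl⟩)]
      ring
    · intro hnp
      exact absurd (Finset.mem_Iic.mpr (by intro i; simp : p ≤ p + q)) hnp
  intro hmem
  have hker : Submodule.span ℂ
      {x | ∃ r, lo.lt r (p + q) ∧ x = monomialVec f r (v₁ ⊗ₜ[ℂ] v₂)} ≤ LinearMap.ker Φ := by
    rw [Submodule.span_le]
    rintro x ⟨r, hr, rfl⟩
    exact LinearMap.mem_ker.mpr (key r hr)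
  exact keyval (LinearMap.mem_ker.mp (hker hmem))
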